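/- The total-power function (b₁, b₂) ↦ 1/(b₁·b₂) + 1/b₁, obtained from p₁ + p₂ under the substitutions p₁ = 1/b₁ and p₂ = 1/(b₁·b₂), is jointly convex on the open positive quadrant { (b₁,b₂) : b₁ > 0, b₂ > 0 }. -/
import Mathlib

open Real Set

private lemma quadrant_convex : Convex ℝ {p : ℝ × ℝ | 0 < p.1 ∧ 0 < p.2} := by
  have : {p : ℝ × ℝ | 0 < p.1 ∧ 0 < p.2} = (Ioi (0:ℝ)) ×ˢ (Ioi (0:ℝ)) := rfl
  rw [this]
  exact (convex_Ioi 0).prod (convex_Ioi 0)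

private lemma exp_convex_combo {u v a b : ℝ} (ha : 0 ≤ a) (hb : 0 ≤ b) (hab : a + b = 1) :
    Real.exp (a * u + b * v) ≤ a * Real.exp u + b * Real.exp v := by
  have := convexOn_exp.2 (Set.mem_univ u) (Set.mem_univ v) ha hb hab
  simpa [smul_eq_mul] using this

private lemma log_concave_combo {x y a b : ℝ} (hx : 0 < x) (hy : 0 < y)
    (ha : 0 ≤ a) (hb : 0 ≤ b) (hab : a + b = 1) :
    a * Real.log x + b * Real.log y ≤ Real.log (a * x + b * y) := by
  have := strictConcaveOn_log_Ioi.concaveOn.2 (mem_Ioi.2 hx) (mem_Ioi.2 hy) ha hb hab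
  simpa [smul_eq_mul] using this

private lemma term1_convex : ConvexOn ℝ {p : ℝ × ℝ | 0 < p.1 ∧ 0 < p.2}
    (fun p : ℝ × ℝ => 1 / (p.1 * p.2)) := by
  refine ⟨quadrant_convex, ?_⟩
  rintro ⟨x1, x2⟩ ⟨hx1, hx2⟩ ⟨y1, y2⟩ ⟨hy1, hy2⟩ a b ha hb hab
  simp only [Prod.smul_mk, Prod.mk_add_mk, smul_eq_mul]
  have hz1 : 0 < a * x1 + b * y1 := by
    rcases hab ▸ (by linarith : (0:ℝ) < a + b) with _
    cases' (lt_or_eq_of_le ha) with h h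
    · have : 0 < a * x1 := mul_pos h hx1
      nlinarith [mul_nonneg hb hy1.le]
    · have hb1 : b = 1 := by linarith
      simp [← h, hb1, hy1]
  have hz2 : 0 < a * x2 + b * y2 := by
    cases' (lt_or_eq_of_le ha) with h h
    · have : 0 < a * x2 := mul_pos h hx2
      nlinarith [mul_nonneg hb hy2.le]
    · have hb1 : b = 1 := by linarith
      simp [← h, hb1, hy2]
  have key : ∀ z w : ℝ, 0 < z → 0 < w → 1 / (z * w) = Real.exp (-(Real.log z + Real.log w)) := by
    intro z w hz hw
    rw [Real.exp_neg, Real.exp_add, Real.exp_log hz, Real.exp_log hw, one_div]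
  rw [key _ _ hz1 hz2, key _ _ hx1 hx2, key _ _ hy1 hy2]
  have hlog : -(Real.log (a * x1 + b * y1) + Real.log (a * x2 + b * y2)) ≤
      a * (-(Real.log x1 + Real.log x2)) + b * (-(Real.log y1 + Real.log y2)) := by
    have h1 := log_concave_combo hx1 hy1 ha hb hab
    have h2 := log_concave_combo hx2 hy2 ha hb hab
    nlinarith
  calc Real.exp (-(Real.log (a * x1 + b * y1) + Real.log (a * x2 + b * y2)))
      ≤ Real.exp (a * (-(Real.log x1 + Real.log x2)) + b * (-(Real.log y1 + Real.log y2))) :=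
        Real.exp_le_exp.2 hlog
    _ ≤ a * Real.exp (-(Real.log x1 + Real.log x2)) + b * Real.exp (-(Real.log y1 + Real.log y2)) :=
        exp_convex_combo ha hb hab

private lemma term2_convex : ConvexOn ℝ {p : ℝ × ℝ | 0 < p.1 ∧ 0 < p.2}
    (fun p : ℝ × ℝ => 1 / p.1) := by
  refine ⟨quadrant_convex, ?_⟩
  rintro ⟨x1, x2⟩ ⟨hx1, hx2⟩ ⟨y1, y2⟩ ⟨hy1, hy2⟩ a b ha hb hab
  simp only [Prod.smul_mk, Prod.mk_add_mk, smul_eq_mul]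
  have hz1 : 0 < a * x1 + b * y1 := by
    cases' (lt_or_eq_of_le ha) with h h
    · have : 0 < a * x1 := mul_pos h hx1
      nlinarith [mul_nonneg hb hy1.le]
    · have hb1 : b = 1 := by linarith
      simp [← h, hb1, hy1]
  have key : ∀ z : ℝ, 0 < z → 1 / z = Real.exp (-Real.log z) := by
    intro z hz
    rw [Real.exp_neg, Real.exp_log hz, one_div]
  rw [key _ hz1, key _ hx1, key _ hy1]
  have hlog : -Real.log (a * x1 + b * y1) ≤ a * (-Real.log x1) + b * (-Real.log y1) := by
    have h1 := log_concave_combo hx1 hy1 ha hb hab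
    nlinarith
  calc Real.exp (-Real.log (a * x1 + b * y1))
      ≤ Real.exp (a * (-Real.log x1) + b * (-Real.log y1)) := Real.exp_le_exp.2 hlog
    _ ≤ a * Real.exp (-Real.log x1) + b * Real.exp (-Real.log y1) :=
        exp_convex_combo ha hb hab

/-- The total-power function `(b₁,b₂) ↦ 1/(b₁·b₂) + 1/b₁`, obtained from `p₁ + p₂`
under the substitutions `p₁ = 1/b₁` and `p₂ = 1/(b₁·b₂)`, is jointly convex on the
open positive quadrant. -/
theorem total_power_substituted_convex :
    ConvexOn ℝ {p : ℝ × ℝ | 0 < p.1 ∧ 0 < p.2}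
      (fun p => 1 / (p.1 * p.2) + 1 / p.1) := by
  exact term1_convex.add term2_convex
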